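/- Let T, Ĉ be real numbers with T > 1, 0 < Ĉ < 1 and TĈ < 1. For real parameters T and Ĉ, define L₉(θ) = TĈ − Ĉ + (1 − TĈ)·cos²θ and R₂(θ) = cos θ + √(L₉(θ)). Let J ⊆ (0,∞) be an open interval and let θ : J → (0, π) and U : J → (0,∞) be differentiable functions satisfying, for all f ∈ J: f·θ'(f) = (1/Ĉ)·R₂(θ(f))·sin(θ(f)) and f·U'(f) = T·sin²(θ(f))·U(f). Then U is twice differentiable on J and U''(f) = TĈ·U(f)·θ'(f)² for all f ∈ J. -/

import Mathlib

open Real Set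

/-- Formula (5.20): from `f·θ' = (1/Ĉ)·R₂(θ)·sin θ` and
`f·U' = T·sin²θ·U`, the function `U` satisfies `U'' = TĈ·U·θ'²`. -/
theorem stmt_16
    (T C : ℝ) (hT : 1 < T) (hC0 : 0 < C) (hC1 : C < 1) (hTC : T * C < 1)
    (L₉ R₂ : ℝ → ℝ)
    (hL₉ : ∀ x : ℝ, L₉ x = T * C - C + (1 - T * C) * (Real.cos x) ^ 2)
    (hR₂ : ∀ x : ℝ, R₂ x = Real.cos x + Real.sqrt (L₉ x))
    (a b : ℝ) (J : Set ℝ) (hJ : J = Ioo a b) (hJsub : J ⊆ Ioi (0:ℝ))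
    (θ U : ℝ → ℝ)
    (hθmem : ∀ f ∈ J, θ f ∈ Ioo (0:ℝ) π)
    (hUpos : ∀ f ∈ J, 0 < U f)
    (hθdiff : ∀ f ∈ J, DifferentiableAt ℝ θ f)
    (hUdiff : ∀ f ∈ J, DifferentiableAt ℝ U f)
    (hθode : ∀ f ∈ J, f * deriv θ f = (1 / C) * R₂ (θ f) * Real.sin (θ f))
    (hUode : ∀ f ∈ J, f * deriv U f = T * (Real.sin (θ f)) ^ 2 * U f) :
    (∀ f ∈ J, DifferentiableAt ℝ (deriv U) f) ∧
    (∀ f ∈ J, deriv (deriv U) f = T * C * U f * (deriv θ f) ^ 2) := by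
  have hJopen : IsOpen J := hJ ▸ isOpen_Ioo
  set g : ℝ → ℝ := fun x => T * Real.sin (θ x) ^ 2 * U x / x with hg
  have hgeq : ∀ f ∈ J, deriv U f = g f := by
    intro f hf
    have hf0 : (f : ℝ) ≠ 0 := ne_of_gt (hJsub hf)
    have := hUode f hf
    simp only [hg]
    field_simp
    linarith [hUode f hf]
  have main : ∀ f ∈ J, DifferentiableAt ℝ (deriv U) f ∧
      deriv (deriv U) f = T * C * U f * (deriv θ f) ^ 2 := by
    intro f hf
    have hf0 : (f : ℝ) ≠ 0 := ne_of_gt (hJsub hf)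
    set θ' := deriv θ f
    set U' := deriv U f
    set s := Real.sin (θ f)
    set c := Real.cos (θ f)
    -- derivative of g at f
    have hθ' : HasDerivAt θ θ' f := (hθdiff f hf).hasDerivAt
    have hU' : HasDerivAt U U' f := (hUdiff f hf).hasDerivAt
    have hsin : HasDerivAt (fun x => Real.sin (θ x)) (c * θ') f :=
      (Real.hasDerivAt_sin (θ f)).comp f hθ'
    have hsin2 : HasDerivAt (fun x => Real.sin (θ x) ^ 2)
        ((2 : ℕ) * Real.sin (θ f) ^ 1 * (c * θ')) f := hsin.pow 2
    have hnum : HasDerivAt (fun x => T * Real.sin (θ x) ^ 2 * U x)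
        ((T * ((2 : ℕ) * Real.sin (θ f) ^ 1 * (c * θ'))) * U f
          + (T * Real.sin (θ f) ^ 2) * U') f :=
      (hsin2.const_mul T).mul hU'
    have hgder : HasDerivAt g
        ((((T * ((2 : ℕ) * Real.sin (θ f) ^ 1 * (c * θ'))) * U f
          + (T * Real.sin (θ f) ^ 2) * U') * f - T * Real.sin (θ f) ^ 2 * U f * 1) / f ^ 2) f :=
      hnum.div (hasDerivAt_id f) hf0
    have hEv : deriv U =ᶠ[nhds f] g :=
      Filter.eventuallyEq_of_mem (hJopen.mem_nhds hf) hgeq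
    have hdiff : DifferentiableAt ℝ (deriv U) f :=
      hgder.differentiableAt.congr_of_eventuallyEq hEv
    refine ⟨hdiff, ?_⟩
    rw [hEv.deriv_eq, hgder.deriv]
    -- algebra
    have hode1 : f * θ' = (1 / C) * R₂ (θ f) * s := hθode f hf
    have hode2 : f * U' = T * s ^ 2 * U f := hUode f hf
    have hL0 : 0 ≤ L₉ (θ f) := by
      rw [hL₉]
      nlinarith [sq_nonneg (Real.cos (θ f)), Real.cos_sq_le_one (θ f)]
    have hsq : Real.sqrt (L₉ (θ f)) ^ 2 = L₉ (θ f) := Real.sq_sqrt hL0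
    have hpyth : s ^ 2 + c ^ 2 = 1 := Real.sin_sq_add_cos_sq (θ f)
    have hkey : R₂ (θ f) ^ 2 - 2 * c * R₂ (θ f) = C * (T * s ^ 2 - 1) := by
      rw [hR₂]
      have : L₉ (θ f) = T * C - C + (1 - T * C) * c ^ 2 := hL₉ (θ f)
      nlinarith [hsq]
    set R := R₂ (θ f)
    have hC0' : C ≠ 0 := ne_of_gt hC0
    rw [div_eq_iff (pow_ne_zero 2 hf0)]
    have hode1' : C * (f * θ') = R * s := by
      rw [hode1]; field_simp
    apply mul_left_cancel₀ hC0'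
    linear_combination (2*T*s*c*U f - T*U f*(C*(f*θ') + R*s)) * hode1'
      + (C*T*s^2) * hode2 - (T*s^2*U f) * hkey
  exact ⟨fun f hf => (main f hf).1, fun f hf => (main f hf).2⟩
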